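/- Let Γ be a subgroup of SL(2,ℂ) that contains no solvable subgroup of finite index. Then the conjugation action of Γ on sl(2,ℂ) is irreducible: the only complex subspaces U ⊆ sl(2,ℂ) with gUg⁻¹ ⊆ U for all g ∈ Γ are U = 0 and U = sl(2,ℂ). -/

import Mathlib

set_option maxHeartbeats 1000000
set_option synthInstance.maxHeartbeats 400000
open scoped commutatorElement

/-- `sl(2,ℂ)`: trace-zero `2 × 2` complex matrices. -/
noncomputable def sl2 : Submodule ℂ (Matrix (Fin 2) (Fin 2) ℂ) :=
  LinearMap.ker (Matrix.traceLinearMap (Fin 2) ℂ ℂ)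

/-- The adjoint (conjugation) operator `Ad g : X ↦ g X g⁻¹` of `g ∈ SL(2,ℂ)` on `sl(2,ℂ)`. -/
noncomputable def Ad (g : Matrix.SpecialLinearGroup (Fin 2) ℂ) : sl2 →ₗ[ℂ] sl2 where
  toFun X := ⟨(g : Matrix (Fin 2) (Fin 2) ℂ) * X.1
      * ((g⁻¹ : Matrix.SpecialLinearGroup (Fin 2) ℂ) : Matrix (Fin 2) (Fin 2) ℂ), by
    have hX : Matrix.trace X.1 = 0 := X.2
    have h1 : ((g⁻¹ : Matrix.SpecialLinearGroup (Fin 2) ℂ) : Matrix (Fin 2) (Fin 2) ℂ)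
        * (g : Matrix (Fin 2) (Fin 2) ℂ) = 1 := by
      rw [← Matrix.SpecialLinearGroup.coe_mul, inv_mul_cancel,
        Matrix.SpecialLinearGroup.coe_one]
    simp only [sl2, LinearMap.mem_ker, Matrix.traceLinearMap_apply]
    rw [Matrix.trace_mul_cycle, h1, one_mul, hX]⟩
  map_add' X Y := Subtype.ext (by simp [Matrix.mul_add, Matrix.add_mul])
  map_smul' c X := Subtype.ext (by simp [Matrix.mul_smul, Matrix.smul_mul])

section AuxLemmas

abbrev SL2' := Matrix.SpecialLinearGroup (Fin 2) ℂ
abbrev M2' := Matrix (Fin 2) (Fin 2) ℂ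

lemma scalar_comm' (a b c p q r s p' q' r' s' : ℂ)
    (h0 : a ≠ 0 ∨ b ≠ 0 ∨ c ≠ 0)
    (eA1 : q * c = b * r) (eA2 : p * b - q * a = a * q + b * s)
    (eA3 : r * a + s * c = c * p - a * r)
    (eB1 : q' * c = b * r') (eB2 : p' * b - q' * a = a * q' + b * s')
    (eB3 : r' * a + s' * c = c * p' - a * r') :
    q * r' = q' * r ∧ (p * q' + q * s' = p' * q + q' * s) ∧
      (r * p' + s * r' = r' * p + s' * r) := by
  by_cases hb : b ≠ 0
  · refine ⟨mul_left_cancel₀ hb ?_, mul_left_cancel₀ hb ?_,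
      mul_left_cancel₀ (pow_ne_zero 2 hb) ?_⟩
    · linear_combination q' * eA1 - q * eB1
    · linear_combination q' * eA2 - q * eB2
    · linear_combination b * (r * eB2 - r' * eA2) + 2 * a * (q * eB1 - q' * eA1)
  · push_neg at hb
    by_cases hc : c ≠ 0
    · refine ⟨mul_left_cancel₀ hc ?_, mul_left_cancel₀ (pow_ne_zero 2 hc) ?_,
        mul_left_cancel₀ hc ?_⟩
      · linear_combination r' * eA1 - r * eB1
      · linear_combination c * (q * eB3 - q' * eA3) + 2 * a * (r * eB1 - r' * eA1)
      · linear_combination r' * eA3 - r * eB3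
    · push_neg at hc
      have ha : a ≠ 0 := by
        rcases h0 with h | h | h <;> [exact h; exact absurd hb h; exact absurd hc h]
      have h2a : (2 : ℂ) * a ≠ 0 := by simp [ha]
      have hq : q = 0 := by
        have h2 : 2 * a * q = 0 := by linear_combination -eA2 + (p - s) * hb
        exact (mul_eq_zero.mp h2).resolve_left h2a
      have hr : r = 0 := by
        have h2 : 2 * a * r = 0 := by linear_combination eA3 + (p - s) * hc
        exact (mul_eq_zero.mp h2).resolve_left h2a
      have hq' : q' = 0 := by
        have h2 : 2 * a * q' = 0 := by linear_combination -eB2 + (p' - s') * hb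
        exact (mul_eq_zero.mp h2).resolve_left h2a
      have hr' : r' = 0 := by
        have h2 : 2 * a * r' = 0 := by linear_combination eB3 + (p' - s') * hc
        exact (mul_eq_zero.mp h2).resolve_left h2a
      subst hq hr hq' hr'
      exact ⟨by ring, by ring, by ring⟩

lemma entry_eqs' {X A : M2'} (hd : X 1 1 = - X 0 0) (hA : A * X = X * A) :
    A 0 1 * X 1 0 = X 0 1 * A 1 0 ∧
    A 0 0 * X 0 1 - A 0 1 * X 0 0 = X 0 0 * A 0 1 + X 0 1 * A 1 1 ∧
    A 1 0 * X 0 0 + A 1 1 * X 1 0 = X 1 0 * A 0 0 - X 0 0 * A 1 0 := by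
  have e00 := congrFun (congrFun hA 0) 0
  have e01 := congrFun (congrFun hA 0) 1
  have e10 := congrFun (congrFun hA 1) 0
  simp [Matrix.mul_apply, Fin.sum_univ_two, hd] at e00 e01 e10
  exact ⟨by linear_combination e00, by linear_combination e01, by linear_combination e10⟩

lemma nonzero_entry' {X : M2'} (hd : X 1 1 = - X 0 0) (hX : X ≠ 0) :
    X 0 0 ≠ 0 ∨ X 0 1 ≠ 0 ∨ X 1 0 ≠ 0 := by
  by_contra h
  push_neg at h
  obtain ⟨h1, h2, h3⟩ := h
  apply hX
  rw [← Matrix.ext_iff]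
  simp only [Fin.forall_fin_two, Matrix.zero_apply]
  exact ⟨⟨h1, h2⟩, h3, by rw [hd, h1]; ring⟩

/-- Two matrices commuting with a nonzero trace-zero `2×2` matrix commute. -/
lemma comm_of_comm' (X A B : M2') (htr : X.trace = 0) (hX : X ≠ 0)
    (hA : A * X = X * A) (hB : B * X = X * B) : A * B = B * A := by
  have hd : X 1 1 = - X 0 0 := by
    rw [Matrix.trace_fin_two] at htr; linear_combination htr
  obtain ⟨eA1, eA2, eA3⟩ := entry_eqs' hd hA
  obtain ⟨eB1, eB2, eB3⟩ := entry_eqs' hd hB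
  obtain ⟨g1, g2, g3⟩ := scalar_comm' (X 0 0) (X 0 1) (X 1 0)
    (A 0 0) (A 0 1) (A 1 0) (A 1 1) (B 0 0) (B 0 1) (B 1 0) (B 1 1)
    (nonzero_entry' hd hX) eA1 eA2 eA3 eB1 eB2 eB3
  rw [← Matrix.ext_iff]
  simp only [Fin.forall_fin_two, Matrix.mul_apply, Fin.sum_univ_two]
  exact ⟨⟨by linear_combination g1, by linear_combination g2⟩,
    by linear_combination g3, by linear_combination -g1⟩

/-- A trace-zero matrix commuting with a nonzero trace-zero `2×2` matrix is
proportional to it. -/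
lemma prop_of_comm' (A B : M2') (htrA : A.trace = 0) (htrB : B.trace = 0)
    (hA : A ≠ 0) (hcomm : B * A = A * B) : ∃ t : ℂ, B = t • A := by
  have hdA : A 1 1 = - A 0 0 := by rw [Matrix.trace_fin_two] at htrA; linear_combination htrA
  have hdB : B 1 1 = - B 0 0 := by rw [Matrix.trace_fin_two] at htrB; linear_combination htrB
  obtain ⟨e1, e2, e3⟩ := entry_eqs' hdA hcomm
  have h0 := nonzero_entry' hdA hA
  set a := A 0 0; set b := A 0 1; set c := A 1 0
  set p := B 0 0; set q := B 0 1; set r := B 1 0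
  have f2 : b * p = a * q := by linear_combination (e2 + b * hdB) / 2
  have f3 : a * r = c * p := by linear_combination (e3 - c * hdB) / 2
  have key : ∃ t : ℂ, p = t * a ∧ q = t * b ∧ r = t * c := by
    rcases h0 with h | h | h
    · refine ⟨p / a, by field_simp, ?_, ?_⟩
      · field_simp; linear_combination -f2
      · field_simp; linear_combination f3
    · refine ⟨q / b, ?_, by field_simp, ?_⟩
      · field_simp; linear_combination f2
      · field_simp; linear_combination -e1
    · refine ⟨r / c, ?_, ?_, by field_simp⟩
      · field_simp; linear_combination -f3
      · field_simp; linear_combination e1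
  obtain ⟨t, h1, h2, h3⟩ := key
  refine ⟨t, ?_⟩
  rw [← Matrix.ext_iff]
  simp only [Fin.forall_fin_two, Matrix.smul_apply, smul_eq_mul]
  exact ⟨⟨h1, h2⟩, h3, by rw [hdB, hdA, h1]; ring⟩

lemma trace_of_mem_sl2' (w : sl2) : (w : M2').trace = 0 := by
  have h : (w : M2') ∈ LinearMap.ker (Matrix.traceLinearMap (Fin 2) ℂ ℂ) := w.2
  rw [LinearMap.mem_ker, Matrix.traceLinearMap_apply] at h
  exact h

lemma finrank_sl2' : Module.finrank ℂ sl2 = 3 := by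
  have hsurj : LinearMap.range (Matrix.traceLinearMap (Fin 2) ℂ ℂ) = ⊤ := by
    rw [LinearMap.range_eq_top]
    intro c
    exact ⟨Matrix.diagonal ![c, 0], by simp [Matrix.trace_diagonal, Fin.sum_univ_two]⟩
  have h := LinearMap.finrank_range_add_finrank_ker (Matrix.traceLinearMap (Fin 2) ℂ ℂ)
  rw [hsurj] at h
  simp only [finrank_top, Module.finrank_self] at h
  have h4 : Module.finrank ℂ (Matrix (Fin 2) (Fin 2) ℂ) = 4 := by
    simp [Module.finrank_matrix]
  rw [h4] at h
  unfold sl2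
  omega

lemma inv_mul_coe' (g : SL2') : ((g⁻¹ : SL2') : M2') * (g : M2') = 1 := by
  rw [← Matrix.SpecialLinearGroup.coe_mul, inv_mul_cancel, Matrix.SpecialLinearGroup.coe_one]

lemma mul_inv_coe' (g : SL2') : (g : M2') * ((g⁻¹ : SL2') : M2') = 1 := by
  rw [← Matrix.SpecialLinearGroup.coe_mul, mul_inv_cancel, Matrix.SpecialLinearGroup.coe_one]

lemma Ad_coe' (g : SL2') (w : sl2) :
    ((Ad g w : sl2) : M2') = (g : M2') * (w : M2') * ((g⁻¹ : SL2') : M2') := rfl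

lemma smul_expand' (α β γ δ : ℂ) (A B : M2') :
    (α • A + β • B) * (γ • A + δ • B) - (γ • A + δ • B) * (α • A + β • B) =
      (α * δ - β * γ) • (A * B - B * A) := by
  simp only [add_mul, mul_add, Matrix.smul_mul, Matrix.mul_smul, smul_smul, smul_sub, sub_smul]
  module

/-- A subgroup of `SL(2,ℂ)` whose conjugation action preserves the line through a nonzero
trace-zero matrix is solvable. -/
lemma solvable_of_invariant_line (Γ : Subgroup SL2') (X : M2')
    (htr : X.trace = 0) (hX0 : X ≠ 0)
    (hinv : ∀ g ∈ Γ, ∃ c : ℂ, (g : M2') * X * ((g⁻¹ : SL2') : M2') = c • X) :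
    IsSolvable Γ := by
  have conj_mul : ∀ g h : SL2', ∀ P : M2',
      ((g * h : SL2') : M2') * P * (((g * h)⁻¹ : SL2') : M2') =
        (g : M2') * ((h : M2') * P * ((h⁻¹ : SL2') : M2')) * ((g⁻¹ : SL2') : M2') := by
    intro g h P
    rw [mul_inv_rev, Matrix.SpecialLinearGroup.coe_mul, Matrix.SpecialLinearGroup.coe_mul]
    noncomm_ring
  have uniq : ∀ c c' : ℂ, c • X = c' • X → c = c' := by
    intro c c' h
    have h2 : (c - c') • X = 0 := by rw [sub_smul, h, sub_self]
    rcases smul_eq_zero.mp h2 with h3 | h3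
    · exact sub_eq_zero.mp h3
    · exact absurd h3 hX0
  have hchar : ∀ γ : Γ, ∃ c : ℂ,
      ((γ : SL2') : M2') * X * (((γ : SL2')⁻¹ : SL2') : M2') = c • X := fun γ => hinv γ γ.2
  choose χ hχ using hchar
  have χ_mul : ∀ γ δ : Γ, χ (γ * δ) = χ γ * χ δ := by
    intro γ δ
    apply uniq
    rw [← hχ (γ * δ)]
    have h1 : ((γ * δ : Γ) : SL2') = (γ : SL2') * (δ : SL2') := rfl
    rw [h1, conj_mul, hχ δ, Matrix.mul_smul, Matrix.smul_mul, hχ γ, smul_smul, mul_comm]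
  have χ_one : χ 1 = 1 := by
    apply uniq
    rw [← hχ 1]
    have h1 : ((1 : Γ) : SL2') = 1 := rfl
    rw [h1, one_smul]
    simp [inv_one, Matrix.SpecialLinearGroup.coe_one]
  have χ_inv : ∀ γ : Γ, χ γ⁻¹ * χ γ = 1 := by
    intro γ
    rw [← χ_mul, inv_mul_cancel, χ_one]
  set S : Subgroup Γ :=
    { carrier := {γ : Γ | ((γ : SL2') : M2') * X = X * ((γ : SL2') : M2')}
      mul_mem' := by
        intro γ δ hγ hδ
        simp only [Set.mem_setOf_eq] at *
        have h1 : (((γ * δ : Γ) : SL2') : M2') = ((γ : SL2') : M2') * ((δ : SL2') : M2') := by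
          rw [show ((γ * δ : Γ) : SL2') = (γ : SL2') * (δ : SL2') from rfl,
            Matrix.SpecialLinearGroup.coe_mul]
        rw [h1, mul_assoc, hδ, ← mul_assoc, hγ, mul_assoc]
      one_mem' := by
        simp only [Set.mem_setOf_eq]
        rw [show ((1 : Γ) : SL2') = 1 from rfl, Matrix.SpecialLinearGroup.coe_one,
          one_mul, mul_one]
      inv_mem' := by
        intro γ hγ
        simp only [Set.mem_setOf_eq] at *
        have h1 : ((γ⁻¹ : Γ) : SL2') = (γ : SL2')⁻¹ := rfl
        rw [h1]
        calc (((γ : SL2')⁻¹ : SL2') : M2') * X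
            = (((γ : SL2')⁻¹ : SL2') : M2') * X *
              (((γ : SL2') : M2') * (((γ : SL2')⁻¹ : SL2') : M2')) := by
              rw [mul_inv_coe', mul_one]
          _ = (((γ : SL2')⁻¹ : SL2') : M2') * (((γ : SL2') : M2') * X) *
              (((γ : SL2')⁻¹ : SL2') : M2') := by rw [hγ]; noncomm_ring
          _ = ((((γ : SL2')⁻¹ : SL2') : M2') * ((γ : SL2') : M2')) * X *
              (((γ : SL2')⁻¹ : SL2') : M2') := by noncomm_ring
          _ = X * (((γ : SL2')⁻¹ : SL2') : M2') := by rw [inv_mul_coe', one_mul] } with hS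
  have hchar_comm : ∀ γ δ : Γ, χ ⁅γ, δ⁆ = 1 := by
    intro γ δ
    rw [commutatorElement_def, χ_mul, χ_mul, χ_mul]
    calc χ γ * χ δ * χ γ⁻¹ * χ δ⁻¹ = (χ γ⁻¹ * χ γ) * (χ δ⁻¹ * χ δ) := by ring
      _ = 1 := by rw [χ_inv, χ_inv, one_mul]
  have hcommS : ∀ γ δ : Γ, ⁅γ, δ⁆ ∈ S := by
    intro γ δ
    have hk := hχ ⁅γ, δ⁆
    rw [hchar_comm γ δ, one_smul] at hk
    have hmem : (((⁅γ, δ⁆ : Γ) : SL2') : M2') * X = X * (((⁅γ, δ⁆ : Γ) : SL2') : M2') := by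
      set k : SL2' := ((⁅γ, δ⁆ : Γ) : SL2') with hk'
      calc (k : M2') * X
          = (k : M2') * X * (((k⁻¹ : SL2') : M2') * (k : M2')) := by
            rw [inv_mul_coe', mul_one]
        _ = ((k : M2') * X * ((k⁻¹ : SL2') : M2')) * (k : M2') := by noncomm_ring
        _ = X * (k : M2') := by rw [hk]
    exact hmem
  have hD1 : derivedSeries Γ 1 ≤ S := by
    rw [show (1 : ℕ) = 0 + 1 from rfl, derivedSeries_succ, derivedSeries_zero]
    exact Subgroup.commutator_le.mpr fun g _ h _ => hcommS g h
  have hSS : ⁅S, S⁆ ≤ (⊥ : Subgroup Γ) := by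
    apply Subgroup.commutator_le.mpr
    intro γ hγ δ hδ
    rw [Subgroup.mem_bot, commutatorElement_eq_one_iff_commute]
    have hγ' : ((γ : SL2') : M2') * X = X * ((γ : SL2') : M2') := hγ
    have hδ' : ((δ : SL2') : M2') * X = X * ((δ : SL2') : M2') := hδ
    have hmat := comm_of_comm' X ((γ : SL2') : M2') ((δ : SL2') : M2') htr hX0 hγ' hδ'
    show γ * δ = δ * γ
    apply Subtype.ext
    apply Subtype.ext
    calc (((γ * δ : Γ) : SL2') : M2') = ((γ : SL2') : M2') * ((δ : SL2') : M2') := by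
          rw [show ((γ * δ : Γ) : SL2') = (γ : SL2') * (δ : SL2') from rfl,
            Matrix.SpecialLinearGroup.coe_mul]
      _ = ((δ : SL2') : M2') * ((γ : SL2') : M2') := hmat
      _ = (((δ * γ : Γ) : SL2') : M2') := by
          rw [show ((δ * γ : Γ) : SL2') = (δ : SL2') * (γ : SL2') from rfl,
            Matrix.SpecialLinearGroup.coe_mul]
  have hD2 : derivedSeries Γ 2 = ⊥ := by
    apply le_bot_iff.mp
    calc derivedSeries Γ 2 = ⁅derivedSeries Γ 1, derivedSeries Γ 1⁆ :=
          derivedSeries_succ _ 1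
      _ ≤ ⁅S, S⁆ := Subgroup.commutator_mono hD1 hD1
      _ ≤ ⊥ := hSS
  exact ⟨⟨2, hD2⟩⟩

end AuxLemmas

/-- If `Γ ⊆ SL(2,ℂ)` contains no solvable subgroup of finite index, then the
conjugation action of `Γ` on `sl(2,ℂ)` is irreducible: the only `Γ`-invariant complex
subspaces of `sl(2,ℂ)` are `0` and `sl(2,ℂ)`. -/
theorem adjoint_action_irreducible (Γ : Subgroup (Matrix.SpecialLinearGroup (Fin 2) ℂ))
    (hΓ : ¬ ∃ H : Subgroup Γ, H.FiniteIndex ∧ IsSolvable H)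
    (U : Submodule ℂ sl2) (hU : ∀ g ∈ Γ, ∀ u ∈ U, Ad g u ∈ U) :
    U = ⊥ ∨ U = ⊤ := by
  by_contra hcon
  push_neg at hcon
  obtain ⟨hUb, hUt⟩ := hcon
  have hline : ∃ X : M2', X.trace = 0 ∧ X ≠ 0 ∧
      ∀ g ∈ Γ, ∃ c : ℂ, (g : M2') * X * ((g⁻¹ : SL2') : M2') = c • X := by
    have hdim : Module.finrank ℂ U = 1 ∨ Module.finrank ℂ U = 2 := by
      have h1 : Module.finrank ℂ U ≠ 0 := fun h => hUb (Submodule.finrank_eq_zero.mp h)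
      have h2 : Module.finrank ℂ U < 3 :=
        finrank_sl2' ▸ Submodule.finrank_lt hUt
      omega
    haveI : Module.Free ℂ U := Module.Free.of_divisionRing ℂ U
    rcases hdim with h | h
    · -- `U` is a line
      obtain ⟨v, hv0, hv⟩ := (finrank_eq_one_iff' (K := ℂ) (V := U)).mp h
      refine ⟨((v : sl2) : M2'), trace_of_mem_sl2' (v : sl2), ?_, ?_⟩
      · intro hc
        exact hv0 (by apply Subtype.ext; apply Subtype.ext; simpa using hc)
      · intro g hg
        have hmem := hU g hg (v : sl2) (SetLike.coe_mem v)
        obtain ⟨c, hc⟩ := hv ⟨Ad g (v : sl2), hmem⟩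
        refine ⟨c, ?_⟩
        have h2 := congrArg (fun w : U => ((w : sl2) : M2')) hc
        simpa [Ad_coe'] using h2.symm
    · -- `U` is a plane: use the bracket of a basis
      have b := Module.finBasisOfFinrankEq ℂ U h
      set Y : sl2 := ((b 0 : U) : sl2) with hYdef
      set Z : sl2 := ((b 1 : U) : sl2) with hZdef
      set A : M2' := (Y : M2') with hAdef
      set B : M2' := (Z : M2') with hBdef
      have hYU : Y ∈ U := (b 0 : U).2
      have hZU : Z ∈ U := (b 1 : U).2
      have hA0 : A ≠ 0 := fun hc =>
        b.ne_zero 0 (by apply Subtype.ext; apply Subtype.ext; exact hc)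
      have hindep : ∀ t : ℂ, B ≠ t • A := by
        intro t hc
        have h2 : b 1 = t • b 0 := by
          apply Subtype.ext; apply Subtype.ext; exact hc
        have h3 := congrArg (fun w => b.repr w 1) h2
        simp only [Module.Basis.repr_self, LinearEquiv.map_smul, Finsupp.smul_apply,
          Finsupp.single_apply] at h3
        norm_num at h3
      have hrep : ∀ u : sl2, u ∈ U → ∃ α β : ℂ, (u : M2') = α • A + β • B := by
        intro u hu
        have hs := congrArg (fun w : U => ((w : sl2) : M2')) (b.sum_repr ⟨u, hu⟩)
        refine ⟨b.repr ⟨u, hu⟩ 0, b.repr ⟨u, hu⟩ 1, ?_⟩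
        simp only [Fin.sum_univ_two, Submodule.coe_add, Submodule.coe_smul] at hs
        exact hs.symm
      refine ⟨A * B - B * A, ?_, ?_, ?_⟩
      · rw [Matrix.trace_sub, Matrix.trace_mul_comm, sub_self]
      · intro hc
        obtain ⟨t, ht⟩ := prop_of_comm' A B (trace_of_mem_sl2' Y) (trace_of_mem_sl2' Z)
          hA0 (sub_eq_zero.mp hc).symm
        exact hindep t ht
      · intro g hg
        obtain ⟨α, β, hA'⟩ := hrep _ (hU g hg Y hYU)
        obtain ⟨γ, δ, hB'⟩ := hrep _ (hU g hg Z hZU)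
        rw [Ad_coe'] at hA' hB'
        refine ⟨α * δ - β * γ, ?_⟩
        have hins : ∀ P Q : M2', (g : M2') * (P * Q) * ((g⁻¹ : SL2') : M2') =
            ((g : M2') * P * ((g⁻¹ : SL2') : M2')) *
              ((g : M2') * Q * ((g⁻¹ : SL2') : M2')) := by
          intro P Q
          calc (g : M2') * (P * Q) * ((g⁻¹ : SL2') : M2')
              = (g : M2') * P * 1 * (Q * ((g⁻¹ : SL2') : M2')) := by noncomm_ring
            _ = (g : M2') * P * (((g⁻¹ : SL2') : M2') * (g : M2')) *
                (Q * ((g⁻¹ : SL2') : M2')) := by rw [inv_mul_coe']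
            _ = ((g : M2') * P * ((g⁻¹ : SL2') : M2')) *
                ((g : M2') * Q * ((g⁻¹ : SL2') : M2')) := by noncomm_ring
        calc (g : M2') * (A * B - B * A) * ((g⁻¹ : SL2') : M2')
            = (g : M2') * (A * B) * ((g⁻¹ : SL2') : M2') -
              (g : M2') * (B * A) * ((g⁻¹ : SL2') : M2') := by noncomm_ring
          _ = ((g : M2') * A * ((g⁻¹ : SL2') : M2')) *
                ((g : M2') * B * ((g⁻¹ : SL2') : M2')) -
              ((g : M2') * B * ((g⁻¹ : SL2') : M2')) *
                ((g : M2') * A * ((g⁻¹ : SL2') : M2')) := by rw [hins, hins]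
          _ = (α • A + β • B) * (γ • A + δ • B) -
              (γ • A + δ • B) * (α • A + β • B) := by rw [hA', hB']
          _ = (α * δ - β * γ) • (A * B - B * A) := smul_expand' α β γ δ A B
  obtain ⟨X, htr, hX0, hinv⟩ := hline
  haveI hsolv : IsSolvable Γ := solvable_of_invariant_line Γ X htr hX0 hinv
  exact hΓ ⟨⊤, inferInstance, (by haveI : Group.IsSolvable Γ := hsolv; exact (inferInstance : Group.IsSolvable (⊤ : Subgroup Γ)))⟩
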